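/- arXiv:2504.06534 — 7 statements merged into one kernel-verified Lean document; each statement's English description precedes it below -/
import Mathlib

section
/- Let uv be an irregular edge of the weighted disk graph G with 2r_u ≤ r_v. Then there is a grid cell c ∈ ⊞_{c_v} of the same grid level as c_v such that u ∈ P_small(c), i.e., u ∈ c and r_u < 8|c|. -/
noncomputable section

/-- Points of the plane. -/
abbrev Pt := EuclideanSpace ℝ (Fin 2)

/-- Membership in the closed axis-parallel square of Euclidean diameter `d`
(side `d/√2`) centered at `p`. -/
def inSq (p : Pt) (d : ℝ) (x : Pt) : Prop :=
  ∀ i, |x i - p i| ≤ d / (2 * Real.sqrt 2)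

/-- Adjacency in the weighted disk graph: distinct points whose disks intersect. -/
def Adj (r : Pt → ℝ) (x y : Pt) : Prop := x ≠ y ∧ dist x y ≤ r x + r y

lemma coord_abs_le_dist (x y : Pt) (i : Fin 2) : |x i - y i| ≤ dist x y := by
  rw [EuclideanSpace.dist_eq]
  rw [show |x i - y i| = dist (x i) (y i) from (Real.dist_eq _ _).symm]
  rw [Real.le_sqrt dist_nonneg]
  · exact Finset.single_le_sum (f := fun j => dist (x j) (y j) ^ 2)
      (fun j _ => sq_nonneg _) (Finset.mem_univ i)
  · positivity

/-- If `uv` is an irregular edge with `2 r u ≤ r v`, and `c_v` is the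
grid cell of level `iv` (diameter `2^iv`) centered at `pv` with `v ∈ c_v` and
`r v ∈ [8·2^iv, 16·2^iv)`, then there is a grid cell `c` of the same level `iv`
(its center `q` differs from `pv` by integer multiples of the side length `2^iv/√2`
in each coordinate) contained in the square `□_{c_v}` of diameter `69·2^iv` centered
at `pv`, such that `u ∈ c` and `r u < 8·2^iv`, i.e. `u ∈ P_small(c)` for some
`c ∈ ⊞_{c_v}` of the same level as `c_v`. -/
theorem irregular_edge_small_cell
    (P : Set Pt) (r : Pt → ℝ) (hr : ∀ p ∈ P, 1 ≤ r p)
    (u v : Pt) (hu : u ∈ P) (hv : v ∈ P)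
    (hedge : Adj r u v) (hirr : 2 * r u ≤ r v)
    (iv : ℤ) (pv : Pt)
    (hcv : inSq pv ((2:ℝ) ^ iv) v)
    (hrv : 8 * (2:ℝ) ^ iv ≤ r v) (hrv' : r v < 16 * (2:ℝ) ^ iv) :
    ∃ q : Pt,
      (∀ i, ∃ k : ℤ, q i - pv i = (k : ℝ) * ((2:ℝ) ^ iv / Real.sqrt 2)) ∧
      inSq q ((2:ℝ) ^ iv) u ∧
      (∀ x, inSq q ((2:ℝ) ^ iv) x → inSq pv (69 * (2:ℝ) ^ iv) x) ∧
      r u < 8 * (2:ℝ) ^ iv := by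
  obtain ⟨hne, hdist⟩ := hedge
  have h2 : (0:ℝ) < (2:ℝ) ^ iv := by positivity
  have hsqrt2 : (0:ℝ) < Real.sqrt 2 := by positivity
  have hsq2 : Real.sqrt 2 * Real.sqrt 2 = 2 := Real.mul_self_sqrt (by norm_num)
  have hsqrt2_lt : Real.sqrt 2 < 17/12 := by
    nlinarith [Real.sq_sqrt (show (0:ℝ) ≤ 2 by norm_num), Real.sqrt_nonneg 2]
  set s : ℝ := (2:ℝ) ^ iv / Real.sqrt 2 with hs
  have hs0 : 0 < s := by positivity
  -- r u bound
  have hru : r u < 8 * (2:ℝ) ^ iv := by linarith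
  -- coordinate bound for u
  have hcoord : ∀ i, |u i - pv i| < 24 * (2:ℝ) ^ iv + s / 2 := by
    intro i
    have h1 : |u i - v i| ≤ dist u v := coord_abs_le_dist u v i
    have h2' : |v i - pv i| ≤ (2:ℝ) ^ iv / (2 * Real.sqrt 2) := hcv i
    have heq : (2:ℝ) ^ iv / (2 * Real.sqrt 2) = s / 2 := by
      rw [hs]; ring
    have h3 : |u i - pv i| ≤ |u i - v i| + |v i - pv i| := abs_sub_le _ _ _
    have h4 : dist u v < 24 * (2:ℝ) ^ iv := by linarith
    rw [heq] at h2'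
    linarith
  set k : Fin 2 → ℤ := fun i => round ((u i - pv i) / s) with hk
  have hkabs : ∀ i, |(k i : ℝ)| ≤ 34 := by
    intro i
    have ht : |(u i - pv i) / s| < 24 * Real.sqrt 2 + 1/2 := by
      rw [abs_div, abs_of_pos hs0, div_lt_iff₀ hs0]
      have : 24 * (2:ℝ)^iv = 24 * Real.sqrt 2 * s := by
        rw [hs]; field_simp
      calc |u i - pv i| < 24 * (2:ℝ)^iv + s/2 := hcoord i
        _ = (24 * Real.sqrt 2 + 1/2) * s := by rw [this]; ring
    have hr1 : |(k i : ℝ) - (u i - pv i)/s| ≤ 1/2 := by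
      rw [abs_sub_comm]; simpa [hk] using abs_sub_round ((u i - pv i)/s)
    have h35 : |(k i : ℝ)| < 35 := by
      have := abs_sub_abs_le_abs_sub ((k i : ℝ)) ((u i - pv i)/s)
      nlinarith
    have : |k i| < 35 := by exact_mod_cast (by push_cast; exact h35 : |(k i : ℝ)| < (35:ℝ))
    have : |k i| ≤ 34 := by omega
    exact_mod_cast this
  have hkd : ∀ i, |u i - pv i - (k i : ℝ) * s| ≤ s / 2 := by
    intro i
    have hr1 : |(u i - pv i)/s - (k i : ℝ)| ≤ 1/2 := by
      simpa [hk] using abs_sub_round ((u i - pv i)/s)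
    have heq3 : u i - pv i - (k i : ℝ) * s = ((u i - pv i)/s - (k i : ℝ)) * s := by
      field_simp
    rw [heq3, abs_mul, abs_of_pos hs0]
    calc |(u i - pv i)/s - (k i : ℝ)| * s ≤ (1/2) * s :=
          mul_le_mul_of_nonneg_right hr1 hs0.le
      _ = s / 2 := by ring
  have heq2 : (2:ℝ) ^ iv / (2 * Real.sqrt 2) = s / 2 := by rw [hs]; ring
  refine ⟨WithLp.toLp 2 (fun i => pv i + (k i : ℝ) * s : Fin 2 → ℝ), fun i => ⟨k i, by simp [hs]⟩,
    ?_, ?_, hru⟩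
  · intro i
    rw [heq2]
    have := hkd i
    have : |u i - (pv i + (k i : ℝ) * s)| ≤ s / 2 := by
      rw [show u i - (pv i + (k i : ℝ) * s) = u i - pv i - (k i : ℝ) * s by ring]
      exact this
    simpa using this
  · intro x hx i
    have h1 : |x i - (pv i + (k i : ℝ) * s)| ≤ s / 2 := by
      have := hx i; rw [heq2] at this; simpa using this
    have h2' : |x i - pv i| ≤ |x i - (pv i + (k i : ℝ) * s)| + |(k i : ℝ) * s| := by
      have := abs_sub_le (x i) (pv i + (k i : ℝ) * s) (pv i)
      simpa [abs_sub_comm, add_sub_cancel_left] using this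
    have h3 : |(k i : ℝ) * s| ≤ 34 * s := by
      rw [abs_mul, abs_of_pos hs0]
      exact mul_le_mul_of_nonneg_right (hkabs i) hs0.le
    have h4 : 69 * (2:ℝ) ^ iv / (2 * Real.sqrt 2) = 69 / 2 * s := by
      rw [hs]; ring
    rw [h4]
    linarith
end
end

section
/- Let c be a grid cell and let u and u' be small neighbors of c, both connected to the source s in G. Then |d(u) − d(u')| ≤ 65|c|. -/
noncomputable section

/-- A (simple) path from `s` to `v` in the weighted disk graph on `P`. -/
def IsPath (P : Set Pt) (r : Pt → ℝ) (s v : Pt) (L : List Pt) : Prop :=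
  L.head? = some s ∧ L.getLast? = some v ∧ (∀ x ∈ L, x ∈ P) ∧ L.Nodup ∧ L.Chain' (Adj r)

/-- The length of a path: the sum of the Euclidean lengths of its edges. -/
def pathLen : List Pt → ℝ
  | [] => 0
  | [_] => 0
  | a :: b :: L => dist a b + pathLen (b :: L)

/-- Shortest-path distance from `s` to `v` in the weighted disk graph on `P`. -/
def spDist (P : Set Pt) (r : Pt → ℝ) (s v : Pt) : ℝ :=
  sInf (pathLen '' {L | IsPath P r s v L})

lemma pathLen_nonneg : ∀ L : List Pt, 0 ≤ pathLen L
  | [] => le_refl 0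
  | [_] => le_refl 0
  | _ :: b :: L => add_nonneg dist_nonneg (pathLen_nonneg (b :: L))

lemma pathLen_cons_cons (a b : Pt) (L : List Pt) :
    pathLen (a :: b :: L) = dist a b + pathLen (b :: L) := rfl

lemma pathLen_cut : ∀ (M : List Pt) (a b : Pt) (C : List Pt),
    dist a b + pathLen (b :: C) ≤ pathLen (a :: (M ++ b :: C)) := by
  intro M
  induction M with
  | nil => intro a b C; simp [pathLen_cons_cons]
  | cons y M ih =>
    intro a b C
    have h1 := ih y b C
    have h2 := dist_triangle a y b
    have h3 : pathLen (a :: ((y :: M) ++ b :: C)) =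
        dist a y + pathLen (y :: (M ++ b :: C)) := by
      simp [List.cons_append, pathLen_cons_cons]
    rw [h3]; linarith

lemma pathLen_concat2 : ∀ (L : List Pt) (x a : Pt),
    pathLen (L ++ [x] ++ [a]) = pathLen (L ++ [x]) + dist x a := by
  intro L
  induction L with
  | nil => intro x a; simp [pathLen, pathLen_cons_cons]
  | cons y L ih =>
    intro x a
    cases L with
    | nil => simp [pathLen, pathLen_cons_cons]
    | cons z T =>
      have h := ih x a
      simp only [List.cons_append] at h ⊢
      rw [pathLen_cons_cons, pathLen_cons_cons]
      rw [h]; ring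

lemma chain'_concat {R : Pt → Pt → Prop} (X : List Pt) (a : Pt) (h : X.Chain' R)
    (h2 : ∀ x ∈ X.getLast?, R x a) : (X ++ [a]).Chain' R :=
  List.isChain_append.mpr ⟨h, List.isChain_singleton a, fun x hx y hy => by
    simp at hy; subst hy; exact h2 x hx⟩

lemma chain_adj (r : Pt → ℝ) : ∀ L : List Pt, L.Nodup →
    L.Chain' (fun x y => dist x y ≤ r x + r y) → L.Chain' (Adj r) := by
  intro L
  induction L with
  | nil => intro _ _; exact List.isChain_nil
  | cons a M ih =>
    intro hnd hch
    unfold List.Chain' at hch ⊢; rw [List.isChain_cons] at hch ⊢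
    rw [List.nodup_cons] at hnd
    refine ⟨fun y hy => ⟨?_, hch.1 y hy⟩, ih hnd.2 hch.2⟩
    intro h; exact hnd.1 (h ▸ List.mem_of_mem_head? hy)

lemma walk_to_path (r : Pt → ℝ) : ∀ (n : ℕ) (L : List Pt), L.length ≤ n →
    L.Chain' (fun x y => dist x y ≤ r x + r y) →
    ∃ L' : List Pt, L'.head? = L.head? ∧ L'.getLast? = L.getLast? ∧ L'.Nodup ∧
      L'.Chain' (fun x y => dist x y ≤ r x + r y) ∧ (∀ x ∈ L', x ∈ L) ∧
      pathLen L' ≤ pathLen L := by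
  intro n
  induction n with
  | zero =>
    intro L hL _
    have : L = [] := List.eq_nil_of_length_eq_zero (Nat.le_zero.mp hL)
    subst this
    exact ⟨[], rfl, rfl, List.nodup_nil, List.isChain_nil, by simp, le_refl _⟩
  | succ n ih =>
    intro L hL hC
    match L with
    | [] => exact ⟨[], rfl, rfl, List.nodup_nil, List.isChain_nil, by simp, le_refl _⟩
    | a :: M =>
      by_cases ha : a ∈ M
      · obtain ⟨B, C, rfl⟩ := List.append_of_mem ha
        have hsplit : a :: (B ++ a :: C) = (a :: B) ++ (a :: C) := by simp
        have hC2 : (a :: C).Chain' (fun x y => dist x y ≤ r x + r y) := by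
          rw [hsplit] at hC; exact (List.isChain_append.mp hC).2.1
        have hlen : (a :: C).length ≤ n := by
          simp only [List.length_cons, List.length_append] at hL ⊢; omega
        obtain ⟨L', h1, h2, h3, h4, h5, h6⟩ := ih (a :: C) hlen hC2
        refine ⟨L', by rw [h1]; rfl, ?_, h3, h4, ?_, ?_⟩
        · rw [h2, hsplit, List.getLast?_append]
          cases hc : (a :: C).getLast? with
          | none => rw [List.getLast?_eq_none_iff] at hc; exact absurd hc (by simp)
          | some z => rfl
        · intro x hx
          have := h5 x hx
          simp only [List.mem_cons, List.mem_append] at this ⊢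
          tauto
        · calc pathLen L' ≤ pathLen (a :: C) := h6
            _ ≤ pathLen (a :: (B ++ a :: C)) := by
              have := pathLen_cut B a a C
              simpa using this
      · have hlen : M.length ≤ n := by simp at hL; omega
        obtain ⟨L', h1, h2, h3, h4, h5, h6⟩ := ih M hlen hC.tail
        have haL' : a ∉ L' := fun h => ha (h5 a h)
        refine ⟨a :: L', by simp, ?_, List.nodup_cons.mpr ⟨haL', h3⟩, ?_, ?_, ?_⟩
        · cases hL' : L' with
          | nil =>
            have hM : M = [] := by
              rw [← List.getLast?_eq_none_iff, ← h2, hL']; rfl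
            subst hM; rfl
          | cons b T =>
            rw [hL'] at h2
            cases M with
            | nil => simp at h2
            | cons c M₂ =>
              rw [List.getLast?_cons_cons, List.getLast?_cons_cons, h2]
        · unfold List.Chain'; rw [List.isChain_cons]
          refine ⟨fun y hy => ?_, h4⟩
          rw [h1] at hy
          exact (List.isChain_cons.mp hC).1 y hy
        · intro x hx
          rcases List.mem_cons.mp hx with h | h
          · exact h ▸ List.mem_cons_self
          · exact List.mem_cons_of_mem a (h5 x h)
        · cases hL' : L' with
          | nil =>
            have h0 : pathLen [a] = 0 := rfl
            rw [h0]; exact pathLen_nonneg _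
          | cons b T =>
            rw [hL'] at h1 h6
            cases M with
            | nil => simp at h1
            | cons c M₂ =>
              have hbc : b = c := by simpa using h1
              subst hbc
              rw [pathLen_cons_cons, pathLen_cons_cons]
              linarith

lemma dist_le_of_inSq (pc : Pt) (dc : ℝ) (hdc : 0 ≤ dc) (x y : Pt)
    (hx : inSq pc dc x) (hy : inSq pc dc y) : dist x y ≤ dc := by
  have s2 : (0:ℝ) < Real.sqrt 2 := Real.sqrt_pos.mpr two_pos
  have coord : ∀ i, dist (x i) (y i) ≤ dc / Real.sqrt 2 := by
    intro i
    have hxi := hx i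
    have hyi := hy i
    rw [Real.dist_eq]
    have h3 : |x i - y i| ≤ |x i - pc i| + |pc i - y i| := abs_sub_le _ _ _
    have h4 : |pc i - y i| = |y i - pc i| := abs_sub_comm _ _
    have h5 : dc / (2 * Real.sqrt 2) + dc / (2 * Real.sqrt 2) = dc / Real.sqrt 2 := by
      field_simp; ring
    linarith
  rw [EuclideanSpace.dist_eq]
  have q : (dc / Real.sqrt 2) ^ 2 = dc ^ 2 / 2 := by
    rw [div_pow, Real.sq_sqrt two_pos.le]
  have hsum : ∑ i, dist (x i) (y i) ^ 2 ≤ dc ^ 2 := by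
    rw [Fin.sum_univ_two]
    have e0 : dist (x 0) (y 0) ^ 2 ≤ dc ^ 2 / 2 := by
      rw [← q]; exact pow_le_pow_left₀ dist_nonneg (coord 0) 2
    have e1 : dist (x 1) (y 1) ^ 2 ≤ dc ^ 2 / 2 := by
      rw [← q]; exact pow_le_pow_left₀ dist_nonneg (coord 1) 2
    linarith
  calc Real.sqrt (∑ i, dist (x i) (y i) ^ 2) ≤ Real.sqrt (dc ^ 2) :=
        Real.sqrt_le_sqrt hsum
    _ = dc := Real.sqrt_sq hdc

lemma spDist_step (P : Set Pt) (r : Pt → ℝ) (s u u' m m' : Pt)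
    (hm : m ∈ P) (hm' : m' ∈ P) (hu' : u' ∈ P)
    (h1 : dist u m ≤ r u + r m) (h2 : dist m m' ≤ r m + r m')
    (h3 : dist m' u' ≤ r m' + r u')
    (hconn : ∃ L, IsPath P r s u L) :
    spDist P r s u' ≤ spDist P r s u + (dist u m + dist m m' + dist m' u') := by
  set c := dist u m + dist m m' + dist m' u' with hc
  have bdd : ∀ v : Pt, BddBelow (pathLen '' {L | IsPath P r s v L}) := by
    intro v
    exact ⟨0, by rintro z ⟨L2, _, rfl⟩; exact pathLen_nonneg L2⟩
  have key : ∀ y ∈ pathLen '' {L | IsPath P r s u L}, spDist P r s u' ≤ y + c := by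
    rintro y ⟨L, hL, rfl⟩
    obtain ⟨hhead, hlast, hP, hnd, hch⟩ := hL
    obtain ⟨L₀, rfl⟩ := List.getLast?_eq_some_iff.mp hlast
    have hchR : (L₀ ++ [u]).Chain' (fun x y => dist x y ≤ r x + r y) :=
      hch.imp (fun a b h => h.2)
    have step1 : (L₀ ++ [u] ++ [m]).Chain' (fun x y => dist x y ≤ r x + r y) := by
      refine chain'_concat _ _ hchR ?_
      rw [List.getLast?_concat]
      intro x hx
      simp only [Option.mem_def, Option.some.injEq] at hx
      subst hx; exact h1
    have step2 : (L₀ ++ [u] ++ [m] ++ [m']).Chain' (fun x y => dist x y ≤ r x + r y) := by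
      refine chain'_concat _ _ step1 ?_
      rw [List.getLast?_concat]
      intro x hx
      simp only [Option.mem_def, Option.some.injEq] at hx
      subst hx; exact h2
    have step3 : (L₀ ++ [u] ++ [m] ++ [m'] ++ [u']).Chain' (fun x y => dist x y ≤ r x + r y) := by
      refine chain'_concat _ _ step2 ?_
      rw [List.getLast?_concat]
      intro x hx
      simp only [Option.mem_def, Option.some.injEq] at hx
      subst hx; exact h3
    set W := L₀ ++ [u] ++ [m] ++ [m'] ++ [u'] with hW
    have hWhead : W.head? = some s := by
      have hassoc : W = (L₀ ++ [u]) ++ ([m] ++ [m'] ++ [u']) := by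
        simp [hW, List.append_assoc]
      rw [hassoc, List.head?_append, hhead]; rfl
    have hWlast : W.getLast? = some u' := List.getLast?_concat
    have hWlen : pathLen W = pathLen (L₀ ++ [u]) + c := by
      rw [hW, pathLen_concat2, pathLen_concat2, pathLen_concat2, hc]; ring
    obtain ⟨L', p1, p2, p3, p4, p5, p6⟩ := walk_to_path r W.length W le_rfl step3
    have hPath : IsPath P r s u' L' := by
      refine ⟨p1.trans hWhead, p2.trans hWlast, ?_, p3, chain_adj r L' p3 p4⟩
      intro x hx
      have := p5 x hx
      simp only [hW, List.mem_append, List.mem_singleton] at this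
      rcases this with (((hA | hB) | hB') | hB'') | hB'''
      · exact hP x (List.mem_append.mpr (Or.inl hA))
      · exact hP x (List.mem_append.mpr (Or.inr (by simpa using hB)))
      · exact hB' ▸ hm
      · exact hB'' ▸ hm'
      · exact hB''' ▸ hu'
    have hmem : pathLen L' ∈ pathLen '' {L | IsPath P r s u' L} := ⟨L', hPath, rfl⟩
    calc spDist P r s u' ≤ pathLen L' := csInf_le (bdd u') hmem
      _ ≤ pathLen W := p6
      _ = pathLen (L₀ ++ [u]) + c := hWlen
  have hne : (pathLen '' {L | IsPath P r s u L}).Nonempty :=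
    hconn.elim fun L hL => ⟨pathLen L, L, hL, rfl⟩
  have hlow : spDist P r s u' - c ≤ sInf (pathLen '' {L | IsPath P r s u L}) :=
    le_csInf hne (fun y hy => by linarith [key y hy])
  have : spDist P r s u = sInf (pathLen '' {L | IsPath P r s u L}) := rfl
  linarith

/-- Let `c` be a grid cell (an axis-parallel square of diameter `dc`
centered at `pc`) and let `u, u'` be small neighbors of `c`: there are vertices
`m, m' ∈ P_mid(c)` (i.e. in `c` with radii in `[8 dc, 16 dc)`) forming irregular edges
with `u, u'` respectively, with `r m ≥ 2 r u` and `r m' ≥ 2 r u'`. If `u` and `u'` are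
connected to the source `s`, then `|d(u) − d(u')| ≤ 65·dc`. -/
theorem small_neighbors_distance_difference
    (P : Set Pt) (r : Pt → ℝ) (hr : ∀ p ∈ P, 1 ≤ r p)
    (s : Pt) (hs : s ∈ P)
    (pc : Pt) (dc : ℝ) (hdc : 0 < dc)
    (u u' : Pt) (hu : u ∈ P) (hu' : u' ∈ P)
    (m : Pt) (hm : m ∈ P) (hmc : inSq pc dc m)
    (hmr : 8 * dc ≤ r m) (hmr' : r m < 16 * dc)
    (hedge : Adj r m u) (hirr : 2 * r u ≤ r m)
    (m' : Pt) (hm' : m' ∈ P) (hmc' : inSq pc dc m')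
    (hmr2 : 8 * dc ≤ r m') (hmr2' : r m' < 16 * dc)
    (hedge' : Adj r m' u') (hirr' : 2 * r u' ≤ r m')
    (hconn : ∃ L, IsPath P r s u L) (hconn' : ∃ L, IsPath P r s u' L) :
    |spDist P r s u - spDist P r s u'| ≤ 65 * dc := by
  have hmm' : dist m m' ≤ dc := dist_le_of_inSq pc dc hdc.le m m' hmc hmc'
  have hum : dist u m ≤ r u + r m := by rw [dist_comm]; linarith [hedge.2]
  have hu'm' : dist u' m' ≤ r u' + r m' := by rw [dist_comm]; linarith [hedge'.2]
  have h2 : dist m m' ≤ r m + r m' := by linarith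
  have h2' : dist m' m ≤ r m' + r m := by rw [dist_comm]; linarith
  have hfwd := spDist_step P r s u u' m m' hm hm' hu' hum h2 hedge'.2 hconn
  have hbwd := spDist_step P r s u' u m' m hm' hm hu hu'm' h2' hedge.2 hconn'
  have b1 : dist u m + dist m m' + dist m' u' ≤ 65 * dc := by
    have := hedge'.2
    linarith
  have b2 : dist u' m' + dist m' m + dist m m' ≤ 65 * dc := by linarith
  have b2' : dist u' m' + dist m' m + dist m u ≤ 65 * dc := by
    have := hedge.2
    have : dist m' m ≤ dc := by rw [dist_comm]; exact hmm'
    linarith [hedge.2]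
  rw [abs_sub_le_iff]
  constructor <;> linarith
end
end

section
/- Let o ∈ ℝ² and ℓ > 0. Let u, v ∈ ℝ² with radii r_u, r_v ≥ 2^10·ℓ be such that the angle ∠uov is at most arcsin(1/100), and | |uo| − r_u | < 5ℓ and | |vo| − r_v | < 5ℓ. Then |uv| ≤ r_u + r_v. (Consequently, the vertex set P_large(λ) of a pair λ = (c, C) forms a clique in the weighted disk graph.) -/
noncomputable section

/-- Let `o ∈ ℝ²` and `ℓ > 0`. Let `u, v ∈ ℝ²` with radii
`ru, rv ≥ 2^10·ℓ` such that the angle `∠ u o v` is at most `arcsin(1/100)`, and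
`||uo| − ru| < 5ℓ`, `||vo| − rv| < 5ℓ`. Then `|uv| ≤ ru + rv`; consequently the
set `P_large(λ)` of a pair `λ = (c, C)` forms a clique in the weighted disk graph. -/
theorem plarge_clique
    (o : Pt) (ℓ : ℝ) (hℓ : 0 < ℓ)
    (u v : Pt) (ru rv : ℝ)
    (hru : 2 ^ 10 * ℓ ≤ ru) (hrv : 2 ^ 10 * ℓ ≤ rv)
    (hangle : EuclideanGeometry.angle u o v ≤ Real.arcsin (1 / 100))
    (hu : |dist u o - ru| < 5 * ℓ) (hv : |dist v o - rv| < 5 * ℓ) :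
    dist u v ≤ ru + rv := by
  have hθ0 : 0 ≤ EuclideanGeometry.angle u o v := EuclideanGeometry.angle_nonneg u o v
  have hθ2 : EuclideanGeometry.angle u o v ≤ Real.pi / 2 :=
    hangle.trans (Real.arcsin_le_pi_div_two _)
  have hc : 0 ≤ Real.cos (EuclideanGeometry.angle u o v) :=
    Real.cos_nonneg_of_mem_Icc ⟨by linarith [Real.pi_pos], hθ2⟩
  have law := EuclideanGeometry.law_cos u o v
  have hau := abs_lt.mp hu
  have hav := abs_lt.mp hv
  have ha : 1019 * ℓ ≤ dist u o := by nlinarith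
  have hb : 1019 * ℓ ≤ dist v o := by nlinarith
  have hd : 0 ≤ dist u v := dist_nonneg
  have hdu : 0 ≤ dist u o := dist_nonneg
  have hdv : 0 ≤ dist v o := dist_nonneg
  have hsq : dist u v * dist u v ≤ (ru + rv) * (ru + rv) := by
    rw [law]
    nlinarith [mul_nonneg (mul_nonneg (mul_nonneg (by norm_num : (0:ℝ) ≤ 2) hdu) hdv) hc, hau.1, hau.2, hav.1, hav.2]
  nlinarith [hsq, hd]
end
end

section
/- Let o ∈ ℝ² and ℓ > 0. Let v, v' ∈ ℝ² with radii r_v ≥ r_{v'} ≥ 2^10·ℓ be such that the angle ∠v o v' is at most arcsin(1/100), and | |vo| − r_v | < 5ℓ and | |v'o| − r_{v'} | < 5ℓ. Then |vv'| < r_v − 6ℓ. -/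
noncomputable section

/-- Let `o ∈ ℝ²` and `ℓ > 0`. Let `v, v' ∈ ℝ²` with radii
`rv ≥ rv' ≥ 2^10·ℓ` such that the angle `∠ v o v'` is at most `arcsin(1/100)`, and
`||vo| − rv| < 5ℓ`, `||v'o| − rv'| < 5ℓ`. Then `|vv'| < rv - 6ℓ`. -/
theorem plarge_close
    (o : Pt) (ℓ : ℝ) (hℓ : 0 < ℓ)
    (v v' : Pt) (rv rv' : ℝ)
    (hord : rv' ≤ rv) (hrv' : 2 ^ 10 * ℓ ≤ rv')
    (hangle : EuclideanGeometry.angle v o v' ≤ Real.arcsin (1 / 100))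
    (hv : |dist v o - rv| < 5 * ℓ) (hv' : |dist v' o - rv'| < 5 * ℓ) :
    dist v v' < rv - 6 * ℓ := by
  set θ := EuclideanGeometry.angle v o v' with hθ
  set a := dist v o
  set b := dist v' o
  have law : dist v v' ^ 2 = a ^ 2 + b ^ 2 - 2 * a * b * Real.cos θ := by
    have := EuclideanGeometry.law_cos v o v'
    ring_nf
    ring_nf at this
    linarith
  have hθ0 : 0 ≤ θ := EuclideanGeometry.angle_nonneg _ _ _
  have hcos1 : Real.cos θ ≤ 1 := Real.cos_le_one _
  have hcoslb : (9999 : ℝ) / 10000 ≤ Real.cos θ := by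
    have h1 : Real.cos (Real.arcsin (1 / 100)) ≤ Real.cos θ := by
      apply Real.cos_le_cos_of_nonneg_of_le_pi hθ0 _ hangle
      have := Real.arcsin_le_pi_div_two (1 / 100 : ℝ)
      linarith [Real.pi_pos]
    have h2 : Real.cos (Real.arcsin (1 / 100)) = Real.sqrt (1 - (1/100:ℝ)^2) := by
      rw [Real.cos_arcsin]
    have h3 : (9999 : ℝ) / 10000 ≤ Real.sqrt (1 - (1/100:ℝ)^2) := by
      rw [show (1 - (1/100:ℝ)^2) = (9999:ℝ)/10000 by norm_num]
      have h4 := Real.sq_sqrt (show (0:ℝ) ≤ 9999/10000 by norm_num)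
      have h5 := Real.sqrt_nonneg ((9999:ℝ)/10000)
      nlinarith
    linarith
  rw [abs_lt] at hv hv'
  have ha0 : 0 ≤ a := dist_nonneg
  have hb0 : 0 ≤ b := dist_nonneg
  have hd0 : 0 ≤ dist v v' := dist_nonneg
  have key : dist v v' ^ 2 < (rv - 6 * ℓ) ^ 2 := by
    rw [law]
    nlinarith [sq_nonneg (a - b), mul_nonneg ha0 hb0, sq_nonneg (rv - rv'),
      mul_le_mul_of_nonneg_left hcoslb (mul_nonneg ha0 hb0),
      mul_nonneg (mul_nonneg ha0 hb0) (sub_nonneg.2 hcos1)]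
  exact lt_of_pow_lt_pow_left₀ 2 (by nlinarith) key
end
end

section
/- Let c and c' be grid cells (axis-parallel squares with diameters that are powers of 2), let v ∈ P_mid(c) and u ∈ P_mid(c'), and suppose v is a small neighbor of u, i.e., uv is an edge of G with r_u ≥ 2r_v. Then |c| < |c'| (hence 2|c| ≤ |c'|), and the Euclidean distance from v to the center p(c') satisfies |v p(c')| < 33|c'|. -/
noncomputable section

lemma dist_center_of_inSq (p : Pt) (d : ℝ) (x : Pt) (hd : 0 ≤ d)
    (h : inSq p d x) : dist x p ≤ d / 2 := by
  have hs2 : (0:ℝ) < Real.sqrt 2 := Real.sqrt_pos.2 (by norm_num)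
  have key : ∀ j : Fin 2, dist (x j) (p j) ^ 2 ≤ (d / (2 * Real.sqrt 2)) ^ 2 := by
    intro j
    have := h j
    rw [Real.dist_eq]
    apply sq_le_sq' _ this
    linarith [abs_nonneg (x j - p j)]
  rw [EuclideanSpace.dist_eq]
  have hsum : ∑ j : Fin 2, dist (x j) (p j) ^ 2 ≤ (d / 2) ^ 2 := by
    have h2 : ∑ j : Fin 2, dist (x j) (p j) ^ 2 ≤ 2 * (d / (2 * Real.sqrt 2)) ^ 2 := by
      rw [Fin.sum_univ_two]
      linarith [key 0, key 1]
    have hsq : Real.sqrt 2 ^ 2 = 2 := Real.sq_sqrt (by norm_num)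
    have : 2 * (d / (2 * Real.sqrt 2)) ^ 2 = (d / 2) ^ 2 := by
      field_simp
      nlinarith [hsq]
    linarith
  calc Real.sqrt (∑ j : Fin 2, dist (x j) (p j) ^ 2)
      ≤ Real.sqrt ((d / 2) ^ 2) := Real.sqrt_le_sqrt hsum
    _ = d / 2 := Real.sqrt_sq (by linarith)

/-- Let `c` and `c'` be grid cells (axis-parallel squares of diameters
`2^i`, `2^i'` centered at `pc`, `pc'`), let `v ∈ P_mid(c)` and `u ∈ P_mid(c')`, and
suppose `v` is a small neighbor of `u`: `uv` is an edge of `G` with `r u ≥ 2 r v`. Then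
`|c| < |c'|` (hence `2|c| ≤ |c'|`), and `|v p(c')| < 33·|c'|`. -/
theorem small_neighbor_cell_bound
    (P : Set Pt) (r : Pt → ℝ) (hr : ∀ p ∈ P, 1 ≤ r p)
    (i i' : ℤ) (pc pc' : Pt)
    (v u : Pt) (hvP : v ∈ P) (huP : u ∈ P)
    (hvc : inSq pc ((2:ℝ) ^ i) v)
    (hvr : 8 * (2:ℝ) ^ i ≤ r v) (hvr' : r v < 16 * (2:ℝ) ^ i)
    (huc : inSq pc' ((2:ℝ) ^ i') u)
    (hur : 8 * (2:ℝ) ^ i' ≤ r u) (hur' : r u < 16 * (2:ℝ) ^ i')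
    (hedge : Adj r u v) (hirr : 2 * r v ≤ r u) :
    (2:ℝ) ^ i < (2:ℝ) ^ i' ∧ 2 * (2:ℝ) ^ i ≤ (2:ℝ) ^ i' ∧
      dist v pc' < 33 * (2:ℝ) ^ i' := by
  have h1 : (2:ℝ) ^ i < (2:ℝ) ^ i' := by linarith
  have hii : i < i' := by
    by_contra h
    push_neg at h
    exact absurd (zpow_le_zpow_right₀ (by norm_num : (1:ℝ) ≤ 2) h) (not_le.2 h1)
  have h2 : 2 * (2:ℝ) ^ i ≤ (2:ℝ) ^ i' := by
    have : (2:ℝ) ^ (i + 1) ≤ (2:ℝ) ^ i' :=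
      zpow_le_zpow_right₀ (by norm_num : (1:ℝ) ≤ 2) (by omega)
    rw [zpow_add_one₀ (by norm_num : (2:ℝ) ≠ 0)] at this
    linarith
  have hpos' : (0:ℝ) ≤ (2:ℝ) ^ i' := le_of_lt (zpow_pos (by norm_num) i')
  have hdu : dist u pc' ≤ (2:ℝ) ^ i' / 2 := dist_center_of_inSq pc' _ u hpos' huc
  have hduv : dist v u ≤ r u + r v := by
    rw [dist_comm]; exact hedge.2
  have h3 : dist v pc' < 33 * (2:ℝ) ^ i' := by
    have := dist_triangle v u pc'
    have hrv : r v ≤ r u := by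
      have : 0 < r v := lt_of_lt_of_le one_pos (hr v hvP)
      linarith
    linarith
  exact ⟨h1, h2, h3⟩
end
end

section
/- Let c be a grid cell and let v, v' ∈ P_mid(c). Let w be the predecessor of v' on the shortest s–v' path (so d(v') = d(w) + |wv'|) and let u be the predecessor of w on the shortest s–w path (so d(w) = d(u) + |uw|). If uv' is not an edge of G, then d(u) < d(v). -/
noncomputable section

lemma pathLen_le_append : ∀ (L M : List Pt), pathLen L ≤ pathLen (L ++ M)
  | [], M => pathLen_nonneg M
  | [a], M => by simpa [pathLen] using pathLen_nonneg (a :: M)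
  | a :: b :: L, M => by
    simpa [pathLen] using pathLen_le_append (b :: L) M

lemma pathLen_concat : ∀ (a : Pt) (L : List Pt) (y : Pt),
    pathLen ((a :: L) ++ [y]) = pathLen (a :: L) + dist ((a :: L).getLast (by simp)) y
  | a, [], y => by simp [pathLen]
  | a, b :: L, y => by
    have := pathLen_concat b L y
    simp only [List.cons_append, pathLen] at this ⊢
    have hg : (a :: b :: L).getLast (by simp) = (b :: L).getLast (by simp) :=
      List.getLast_cons (by simp)
    rw [this, hg]
    ring

lemma exists_path_step (P : Set Pt) (r : Pt → ℝ) (s v v' : Pt) (hv'P : v' ∈ P)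
    (hadj : v = v' ∨ Adj r v v') (L : List Pt) (hL : IsPath P r s v L) :
    ∃ L', IsPath P r s v' L' ∧ pathLen L' ≤ pathLen L + dist v v' := by
  obtain ⟨h1, h2, h3, h4, h5⟩ := hL
  by_cases hmem : v' ∈ L
  · obtain ⟨L₁, L₂, rfl⟩ := List.append_of_mem hmem
    have hre : L₁ ++ v' :: L₂ = (L₁ ++ [v']) ++ L₂ := by simp
    refine ⟨L₁ ++ [v'], ⟨?_, ?_, ?_, ?_, ?_⟩, ?_⟩
    · rcases L₁ with _ | ⟨a, L₁⟩ <;> simpa using h1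
    · exact List.getLast?_concat
    · intro x hx
      apply h3
      rcases List.mem_append.mp hx with h | h
      · exact List.mem_append.mpr (Or.inl h)
      · simp only [List.mem_singleton] at h; subst h; simp
    · exact h4.sublist (by rw [hre]; exact ((L₁ ++ [v']).prefix_append L₂).sublist)
    · rw [hre] at h5
      exact (List.isChain_append.mp h5).1
    · calc pathLen (L₁ ++ [v']) ≤ pathLen ((L₁ ++ [v']) ++ L₂) := pathLen_le_append _ _
        _ = pathLen (L₁ ++ v' :: L₂) := by rw [hre]
        _ ≤ _ := le_add_of_nonneg_right dist_nonneg
  · rcases L with _ | ⟨a, L⟩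
    · simp at h1
    have hvlast : (a :: L).getLast (by simp) = v := by
      have h2' : some ((a :: L).getLast (by simp)) = some v := by
        rw [← List.getLast?_eq_getLast, h2]
      exact Option.some.inj h2'
    have hvmem : v ∈ a :: L := by rw [← hvlast]; exact List.getLast_mem _
    have hvne : v ≠ v' := fun h => hmem (h ▸ hvmem)
    have hadj' : Adj r v v' := hadj.resolve_left hvne
    refine ⟨(a :: L) ++ [v'], ⟨?_, ?_, ?_, ?_, ?_⟩, ?_⟩
    · simpa using h1
    · exact List.getLast?_concat
    · intro x hx
      rcases List.mem_append.mp hx with h | h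
      · exact h3 x h
      · simp only [List.mem_singleton] at h; subst h; exact hv'P
    · rw [List.nodup_append]
      exact ⟨h4, List.nodup_singleton _, fun x hx y hy => by simp at hy; subst hy; exact fun h => hmem (h ▸ hx)⟩
    · apply List.isChain_append.mpr
      refine ⟨h5, List.isChain_singleton _, ?_⟩
      intro x hx y hy
      rw [h2] at hx
      simp only [Option.mem_some_iff, List.head?_cons] at hx hy
      subst hx; subst hy
      exact hadj'
    · rw [pathLen_concat, hvlast]

lemma spDist_le (P : Set Pt) (r : Pt → ℝ) (s v : Pt) (L : List Pt) (hL : IsPath P r s v L) :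
    sInf (pathLen '' {L | IsPath P r s v L}) ≤ pathLen L :=
  csInf_le ⟨0, by rintro x ⟨M, _, rfl⟩; exact pathLen_nonneg M⟩ ⟨L, hL, rfl⟩

lemma spDist_tri (P : Set Pt) (r : Pt → ℝ) (s v v' : Pt) (hv'P : v' ∈ P)
    (hadj : v = v' ∨ Adj r v v') (hconn : ∃ L, IsPath P r s v L) :
    sInf (pathLen '' {L | IsPath P r s v' L}) ≤
      sInf (pathLen '' {L | IsPath P r s v L}) + dist v v' := by
  have hne : (pathLen '' {L | IsPath P r s v L}).Nonempty := by
    obtain ⟨L, hL⟩ := hconn; exact ⟨pathLen L, L, hL, rfl⟩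
  rw [← sub_le_iff_le_add]
  apply le_csInf hne
  rintro b ⟨L, hL, rfl⟩
  obtain ⟨L', hL', hlen⟩ := exists_path_step P r s v v' hv'P hadj L hL
  have := spDist_le P r s v' L' hL'
  linarith

lemma inSq_dist (pc : Pt) (dc : ℝ) (hdc : 0 < dc) (x y : Pt)
    (hx : inSq pc dc x) (hy : inSq pc dc y) : dist x y ≤ dc := by
  have hs2 : (0:ℝ) < Real.sqrt 2 := Real.sqrt_pos.mpr (by norm_num)
  have hsq : Real.sqrt 2 ^ 2 = 2 := Real.sq_sqrt (by norm_num)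
  have key : ∀ i, dist (x i) (y i) ^ 2 ≤ dc ^ 2 / 2 := by
    intro i
    have h1 := hx i
    have h2 := hy i
    have h3 : |x i - y i| ≤ dc / Real.sqrt 2 := by
      calc |x i - y i| ≤ |x i - pc i| + |pc i - y i| := abs_sub_le _ _ _
        _ = |x i - pc i| + |y i - pc i| := by rw [abs_sub_comm (pc i)]
        _ ≤ dc / (2 * Real.sqrt 2) + dc / (2 * Real.sqrt 2) := add_le_add h1 h2
        _ = dc / Real.sqrt 2 := by field_simp; ring
    rw [Real.dist_eq]
    have h4 : (dc / Real.sqrt 2) ^ 2 = dc ^ 2 / 2 := by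
      rw [div_pow, hsq]
    nlinarith [abs_nonneg (x i - y i)]
  rw [EuclideanSpace.dist_eq]
  have hsum : ∑ i, dist (x i) (y i) ^ 2 ≤ dc ^ 2 := by
    calc ∑ i, dist (x i) (y i) ^ 2 ≤ ∑ _i : Fin 2, dc ^ 2 / 2 :=
          Finset.sum_le_sum (fun i _ => key i)
      _ = dc ^ 2 := by simp [Finset.sum_const]; ring
  calc Real.sqrt (∑ i, dist (x i) (y i) ^ 2) ≤ Real.sqrt (dc ^ 2) :=
        Real.sqrt_le_sqrt hsum
    _ = dc := Real.sqrt_sq hdc.le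

/-- Let `c` be a grid cell (an axis-parallel square of diameter `dc`
centered at `pc`) and let `v, v' ∈ P_mid(c)`. Let `w` be the predecessor of `v'` on the
shortest `s`–`v'` path (so `w v'` is an edge and `d(v') = d(w) + |wv'|`) and let `u` be
the predecessor of `w` on the shortest `s`–`w` path. If `uv'` is not an edge of `G`,
then `d(u) < d(v)`. -/
theorem grandparent_processed
    (P : Set Pt) (r : Pt → ℝ) (hr : ∀ p ∈ P, 1 ≤ r p)
    (s : Pt) (hs : s ∈ P)
    (pc : Pt) (dc : ℝ) (hdc : 0 < dc)
    (v v' w u : Pt) (hv : v ∈ P) (hv' : v' ∈ P) (hw : w ∈ P) (hu : u ∈ P)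
    (hvc : inSq pc dc v) (hvr : 8 * dc ≤ r v) (hvr' : r v < 16 * dc)
    (hv'c : inSq pc dc v') (hv'r : 8 * dc ≤ r v') (hv'r' : r v' < 16 * dc)
    (hconnv : ∃ L, IsPath P r s v L) (hconnv' : ∃ L, IsPath P r s v' L)
    (hconnw : ∃ L, IsPath P r s w L) (hconnu : ∃ L, IsPath P r s u L)
    (hwv' : Adj r w v')
    (hdv' : spDist P r s v' = spDist P r s w + dist w v')
    (huw : Adj r u w)
    (hdw : spDist P r s w = spDist P r s u + dist u w)
    (hnon : ¬ Adj r u v') :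
    spDist P r s u < spDist P r s v := by
  have hdvv' : dist v v' ≤ dc := inSq_dist pc dc hdc v v' hvc hv'c
  -- d(v') ≤ d(v) + dist v v'
  have hadj : v = v' ∨ Adj r v v' := by
    by_cases h : v = v'
    · exact Or.inl h
    · exact Or.inr ⟨h, by linarith⟩
  have htri : spDist P r s v' ≤ spDist P r s v + dist v v' :=
    spDist_tri P r s v v' hv' hadj hconnv
  -- u ≠ v'
  have hune : u ≠ v' := by
    rintro rfl
    have h0 : dist u w + dist w u = 0 := by
      rw [hdw] at hdv'
      have : dist w u = dist u w := dist_comm w u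
      linarith [hdv', this]
    have : dist u w = 0 := by
      have := dist_nonneg (x := u) (y := w)
      have := dist_nonneg (x := w) (y := u)
      linarith
    exact huw.1 (dist_eq_zero.mp this)
  have hfar : r u + r v' < dist u v' := by
    by_contra h
    exact hnon ⟨hune, le_of_not_gt h⟩
  have hru : 1 ≤ r u := hr u hu
  have htri2 : dist u v' ≤ dist u w + dist w v' := dist_triangle u w v'
  -- d(u) = d(v') - dist u w - dist w v'
  have : spDist P r s u = spDist P r s v' - dist u w - dist w v' := by
    rw [hdv', hdw]; ring
  linarith
end
end

section
/- Let o ∈ ℝ² and ℓ > 0, and let x, w, y, u ∈ ℝ² with radii r_y ≥ 2^10·ℓ be such that |xo| ≤ ℓ, |wo| ≤ ℓ, the angle ∠you is at most arcsin(1/100), |yo| < r_y + 5ℓ, and |uo| ≥ r_y − 5ℓ. Then |xy| + |yu| < |uw| + (1/8)·r_y. -/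
noncomputable section

set_option maxHeartbeats 1600000 in
/-- Let `o ∈ ℝ²` and `ℓ > 0`, and let `x, w, y, u ∈ ℝ²` with radius
`ry ≥ 2^10·ℓ` be such that `|xo| ≤ ℓ`, `|wo| ≤ ℓ`, the angle `∠ y o u` is at most
`arcsin(1/100)`, `|yo| < ry + 5ℓ`, and `|uo| ≥ ry − 5ℓ`. Then
`|xy| + |yu| < |uw| + ry/8`. -/
theorem detour_bound
    (o : Pt) (ℓ : ℝ) (hℓ : 0 < ℓ)
    (x w y u : Pt) (ry : ℝ) (hry : 2 ^ 10 * ℓ ≤ ry)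
    (hx : dist x o ≤ ℓ) (hw : dist w o ≤ ℓ)
    (hangle : EuclideanGeometry.angle y o u ≤ Real.arcsin (1 / 100))
    (hy : dist y o < ry + 5 * ℓ) (hu : ry - 5 * ℓ ≤ dist u o) :
    dist x y + dist y u < dist u w + ry / 8 := by
  set θ := EuclideanGeometry.angle y o u with hθ
  set a := dist y o with ha
  set b := dist u o with hb
  set d := dist y u with hd
  set s := Real.sin θ with hs
  set c := Real.cos θ with hc
  have hθ0 : 0 ≤ θ := EuclideanGeometry.angle_nonneg _ _ _
  have harc : Real.arcsin (1/100) ≤ Real.pi / 2 := Real.arcsin_le_pi_div_two _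
  have hθpi2 : θ ≤ Real.pi / 2 := le_trans (by linarith [hangle]) harc
  have hmem : θ ∈ Set.Icc (-(Real.pi/2)) (Real.pi/2) :=
    ⟨by nlinarith [Real.pi_pos], hθpi2⟩
  have hmem' : Real.arcsin (1/100) ∈ Set.Icc (-(Real.pi/2)) (Real.pi/2) :=
    ⟨Real.neg_pi_div_two_le_arcsin _, harc⟩
  have hs_le : s ≤ 1/100 := by
    have := Real.strictMonoOn_sin.monotoneOn hmem hmem' (by linarith [hangle])
    rwa [Real.sin_arcsin (by norm_num) (by norm_num)] at this
  have hs0 : 0 ≤ s := Real.sin_nonneg_of_nonneg_of_le_pi hθ0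
    (EuclideanGeometry.angle_le_pi _ _ _)
  have hc0 : 0 ≤ c := Real.cos_nonneg_of_mem_Icc hmem
  have hc1 : c ≤ 1 := Real.cos_le_one θ
  have hsc : s^2 + c^2 = 1 := Real.sin_sq_add_cos_sq θ
  have h1mc : 1 - c ≤ s^2 := by nlinarith
  have ha0 : 0 ≤ a := dist_nonneg
  have hb0 : 0 ≤ b := dist_nonneg
  have hd0 : 0 ≤ d := dist_nonneg
  have hd2 : d^2 = a^2 + b^2 - 2*a*b*c := by
    have := EuclideanGeometry.law_cos y o u
    simp only [← ha, ← hb, ← hd, ← hc] at this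
    nlinarith [this]
  -- triangle inequalities
  have hxy : dist x y ≤ ℓ + a := by
    calc dist x y ≤ dist x o + dist o y := dist_triangle _ _ _
    _ = dist x o + a := by rw [dist_comm o y]
    _ ≤ ℓ + a := by linarith
  have huw : b ≤ dist u w + ℓ := by
    calc b = dist u o := rfl
    _ ≤ dist u w + dist w o := dist_triangle _ _ _
    _ ≤ dist u w + ℓ := by linarith
  have hℓry : ℓ ≤ ry / 1024 := by linarith [hry]
  rcases le_total (a*c) b with hcase | hcase
  · have hdle : d ≤ (b - a*c) + a*s := by
      nlinarith [sq_nonneg (d - ((b - a*c) + a*s)), mul_nonneg ha0 hs0,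
        mul_nonneg (sub_nonneg.2 hcase) (mul_nonneg ha0 hs0)]
    have hss : s^2 ≤ 1/10000 := by nlinarith
    have hA : a - a * c ≤ a * (1/10000) := by nlinarith [mul_le_mul_of_nonneg_left h1mc ha0, mul_le_mul_of_nonneg_left hss ha0]
    have hAs : a * s ≤ a * (1/100) := mul_le_mul_of_nonneg_left hs_le ha0
    linarith [hxy, huw, hdle, hy, hℓry, hℓ.le, hA, hAs]
  · have hdle : d ≤ (a*c - b) + a*s := by
      nlinarith [sq_nonneg (d - ((a*c - b) + a*s)), mul_nonneg ha0 hs0,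
        mul_nonneg (sub_nonneg.2 hcase) (mul_nonneg ha0 hs0)]
    have hAs : a * s ≤ a * (1/100) := mul_le_mul_of_nonneg_left hs_le ha0
    have hac : a * c ≤ a := by nlinarith
    have hAs : a * s ≤ a * (1/100) := mul_le_mul_of_nonneg_left hs_le ha0
    linarith [hxy, huw, hdle, hy, hu, hℓry, hℓ.le, hac, hAs]
end
end
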